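/- arXiv:1204.3293 — 3 statements merged into one kernel-verified Lean document; each statement's English description precedes it below -/
import Mathlib

section
/- The set of strings over Σ that are not uniquely decodable from their bigrams is a two-sided ideal under concatenation: if u is not UD then for all strings v, w ∈ Σ*, the string vuw is not UD. -/
/-- The multiset of bigrams (length-2 contiguous substrings) of a list. -/
def bigrams {β : Type*} (l : List β) : Multiset (β × β) :=
  (l.zip l.tail : List (β × β))

/-- The delimited form `$w$` of a string `w` over `α`, with `none` as the delimiter. -/
def delim {α : Type*} (w : List α) : List (Option α) :=
  none :: (w.map some ++ [none])

/-- The bigram encoding of a string: the multiset of bigrams of its delimited form. -/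
def Phi {α : Type*} (w : List α) : Multiset (Option α × Option α) :=
  bigrams (delim w)

/-- A string is uniquely decodable if it is the only string with its bigram encoding. -/
def UD {α : Type*} (w : List α) : Prop :=
  ∀ w' : List α, Phi w' = Phi w → w' = w

lemma bigrams_cons_cons {β : Type*} (a b : β) (t : List β) :
    bigrams (a :: b :: t) = (a, b) ::ₘ bigrams (b :: t) := rfl

lemma bigrams_singleton {β : Type*} (a : β) : bigrams [a] = 0 := rfl

lemma bigrams_split {β : Type*} (p : List β) (b : β) (q : List β) :
    bigrams (p ++ b :: q) = bigrams (p ++ [b]) + bigrams (b :: q) := by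
  induction p with
  | nil => simp [bigrams_singleton]
  | cons a p ih =>
    cases p with
    | nil =>
      simp only [List.nil_append, List.cons_append] at *
      rw [bigrams_cons_cons]
      have : bigrams [a, b] = {(a, b)} := rfl
      rw [this]
      simp [Multiset.singleton_add]
    | cons c p' =>
      simp only [List.cons_append] at *
      rw [bigrams_cons_cons, ih, bigrams_cons_cons, Multiset.cons_add]

lemma fst_mem_dropLast {β : Type*} : ∀ (l : List β) (p : β × β), p ∈ bigrams l → p.1 ∈ l.dropLast
  | [], p, h => by simp [bigrams] at h
  | [a], p, h => by simp [bigrams] at h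
  | a :: b :: t, p, h => by
    rw [bigrams_cons_cons] at h
    rcases Multiset.mem_cons.mp h with h | h
    · subst h; simp
    · have := fst_mem_dropLast (b :: t) p h
      simp only [List.dropLast_cons₂, List.mem_cons]
      right; exact this

lemma snd_mem_tail {β : Type*} (l : List β) (p : β × β) (h : p ∈ bigrams l) : p.2 ∈ l.tail := by
  have : p ∈ l.zip l.tail := by simpa [bigrams] using h
  exact (List.of_mem_zip (by simpa using this)).2

lemma bigrams_cons {β : Type*} (x : β) (q : List β) (hq : q ≠ []) :
    bigrams (x :: q) = (x, q.head hq) ::ₘ bigrams q := by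
  cases q with
  | nil => exact absurd rfl hq
  | cons b t => exact bigrams_cons_cons x b t

lemma Phi_cons {α : Type*} (a : α) (s : List α) :
    Phi (a :: s) = (none, some a) ::ₘ bigrams (List.map some (a :: s) ++ [none]) := by
  show bigrams (none :: (List.map some (a :: s) ++ [none])) = _
  simp only [List.map_cons, List.cons_append]
  rw [bigrams_cons_cons]

lemma bigrams_concat {β : Type*} (m : List β) (d c : β) :
    bigrams ((m ++ [d]) ++ [c]) = bigrams (m ++ [d]) + {(d, c)} := by
  have h := bigrams_split m d [c]
  have h2 : bigrams (d :: [c]) = {(d, c)} := rfl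
  rw [h2] at h
  simpa using h

lemma Phi_mid {α : Type*} (v w m : List α) (a la : α) (s m₀ : List α)
    (h1 : m = a :: s) (h2 : m = m₀ ++ [la]) :
    Phi (v ++ m ++ w) =
      bigrams ((none :: List.map some v) ++ [some a]) + bigrams (List.map some m)
        + ((some la, (List.map some w ++ [(none : Option α)]).head (by simp)) ::ₘ
            bigrams (List.map some w ++ [none])) := by
  have hd : delim (v ++ m ++ w) =
      (none :: List.map some v) ++ (some a :: (List.map some s ++ (List.map some w ++ [none]))) := by
    simp [delim, h1]
  rw [Phi, hd, bigrams_split]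
  rw [add_assoc]
  congr 1
  have he : some a :: (List.map some s ++ (List.map some w ++ [none]))
      = List.map some m₀ ++ (some la :: (List.map some w ++ [none])) := by
    have hma : List.map some m = some a :: (List.map some s) := by simp [h1]
    have h3 : List.map some m = List.map some m₀ ++ [some la] := by simp [h2]
    rw [← List.cons_append, ← hma, h3]
    simp
  rw [he, bigrams_split, bigrams_cons (some la) (List.map some w ++ [none]) (by simp)]
  congr 2
  rw [h2]
  simp

lemma card_Phi {α : Type*} (t : List α) : (Phi t).card = t.length + 1 := by
  simp [Phi, bigrams, delim]

theorem not_UD_two_sided_ideal {α : Type*} [Fintype α] (u : List α) (h : ¬ UD u) :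
    ∀ v w : List α, ¬ UD (v ++ u ++ w) := by
  intro v w hUD
  rw [UD] at h
  push_neg at h
  obtain ⟨u', hphi, hne⟩ := h
  have hlen : u'.length = u.length := by
    have := congrArg Multiset.card hphi
    rw [card_Phi, card_Phi] at this
    omega
  rcases u with _ | ⟨a, s⟩
  · exact hne (List.length_eq_zero_iff.mp (by simpa using hlen))
  rcases u' with _ | ⟨a', s'⟩
  · simp at hlen
  rw [Phi_cons, Phi_cons] at hphi
  -- heads are equal
  have hmem : ((none : Option α), some a') ∈
      ((none : Option α), some a) ::ₘ bigrams (List.map some (a :: s) ++ [none]) := by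
    rw [← hphi]; exact Multiset.mem_cons_self _ _
  have ha : a' = a := by
    rcases Multiset.mem_cons.mp hmem with h | h
    · simpa using h
    · exfalso
      have hdl := fst_mem_dropLast _ _ h
      rw [List.dropLast_concat] at hdl
      simp at hdl
  subst ha
  have hB : bigrams (List.map some (a' :: s') ++ [(none : Option α)])
      = bigrams (List.map some (a' :: s) ++ [none]) := by
    exact (Multiset.cons_inj_right _).mp hphi
  -- decompose as concat
  rcases (a' :: s).eq_nil_or_concat with h0 | ⟨m₀, la, hm⟩
  · simp at h0
  rcases (a' :: s').eq_nil_or_concat with h0 | ⟨m₀', la', hm'⟩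
  · simp at h0
  have hBconcat : bigrams (List.map some (a' :: s')) + {((some la' : Option α), none)}
      = bigrams (List.map some (a' :: s)) + {(some la, none)} := by
    have e3 : List.map some m₀' ++ [some la'] = List.map some (a' :: s') := by
      rw [hm']; simp
    have e4 : List.map some m₀ ++ [some la] = List.map some (a' :: s) := by
      rw [hm]; simp
    have e1 : List.map some (a' :: s') ++ [(none : Option α)]
        = (List.map some m₀' ++ [some la']) ++ [none] := by rw [e3]
    have e2 : List.map some (a' :: s) ++ [(none : Option α)]
        = (List.map some m₀ ++ [some la]) ++ [none] := by rw [e4]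
    rw [e1, e2, bigrams_concat, bigrams_concat, e3, e4] at hB
    exact hB
  have hla : la' = la := by
    have hmem2 : ((some la' : Option α), none) ∈
        bigrams (List.map some (a' :: s)) + ({((some la : Option α), none)} : Multiset _) := by
      rw [← hBconcat]; simp
    rcases Multiset.mem_add.mp hmem2 with h | h
    · exfalso
      have h1 := snd_mem_tail _ _ h
      have h2 := List.mem_of_mem_tail h1
      simp at h2
    · simpa using (Multiset.mem_singleton.mp h)
  subst hla
  have hBB : bigrams (List.map some (a' :: s')) = bigrams (List.map some (a' :: s)) :=
    add_right_cancel hBconcat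
  have hPhiEq : Phi (v ++ (a' :: s') ++ w) = Phi (v ++ (a' :: s) ++ w) := by
    rw [Phi_mid v w (a' :: s') a' la' s' m₀' rfl (by rw [hm']; simp),
      Phi_mid v w (a' :: s) a' la' s m₀ rfl (by rw [hm]; simp), hBB]
  have heq := hUD _ hPhiEq
  apply hne
  rw [List.append_assoc, List.append_assoc] at heq
  have h2 := List.append_cancel_left heq
  exact List.append_cancel_right h2
end

section
/- If two uniquely decodable strings u and v over Σ have no characters in common, then their concatenation uv is uniquely decodable. -/
namespace UDaux

variable {α β γ : Type*}

lemma bigrams_cons_cons (x y : β) (l : List β) :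
    bigrams (x :: y :: l) = (x, y) ::ₘ bigrams (y :: l) := rfl

lemma bigrams_map (f : β → γ) (l : List β) :
    bigrams (l.map f) = (bigrams l).map (Prod.map f f) := by
  simp [bigrams, ← List.map_tail, List.zip_map]

lemma bigrams_append_two (x y : β) (l : List β) :
    bigrams (l ++ [x, y]) = bigrams (l ++ [x]) + {(x, y)} := by
  induction l with
  | nil => simp [bigrams]
  | cons c l ih =>
      cases l with
      | nil => simp [bigrams]; rfl
      | cons d l' =>
          simp only [List.cons_append] at *
          rw [bigrams_cons_cons, bigrams_cons_cons, ih]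
          simp

lemma bigrams_append_replicate (x : β) (n : ℕ) : ∀ (l : List β),
    bigrams (l ++ List.replicate n x ++ [x]) =
      bigrams (l ++ [x]) + Multiset.replicate n (x, x) := by
  induction n with
  | zero => simp
  | succ n ih =>
      intro l
      have h : l ++ List.replicate (n+1) x ++ [x] = (l ++ [x]) ++ List.replicate n x ++ [x] := by
        simp [List.replicate_succ, List.append_assoc]
      rw [h, ih (l ++ [x])]
      have h2 : (l ++ [x]) ++ [x] = l ++ [x, x] := by simp
      rw [h2, bigrams_append_two]
      rw [Multiset.replicate_succ, ← Multiset.singleton_add]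
      abel

lemma bigrams_replicate_append (x : β) (n : ℕ) (l : List β) :
    bigrams (x :: (List.replicate n x ++ l)) =
      Multiset.replicate n (x, x) + bigrams (x :: l) := by
  induction n with
  | zero => simp
  | succ n ih =>
      rw [List.replicate_succ, List.cons_append, bigrams_cons_cons, ih,
        Multiset.replicate_succ]
      simp

lemma none_none_not_mem_aux : ∀ (s : List α) (c : α),
    (none, none) ∉ bigrams ((some c) :: (s.map some ++ [none])) := by
  intro s
  induction s with
  | nil => intro c; simp [bigrams]
  | cons d s ih =>
      intro c
      simp only [List.map_cons, List.cons_append, bigrams_cons_cons]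
      intro h
      rcases Multiset.mem_cons.1 h with h | h
      · simp at h
      · exact ih d h

lemma none_none_not_mem (s : List α) (hs : s ≠ []) : (none, none) ∉ Phi s := by
  cases s with
  | nil => exact absurd rfl hs
  | cons c s =>
      simp only [Phi, delim, List.map_cons, List.cons_append]
      rw [show (none :: some c :: (s.map some ++ [none]) : List (Option α)) =
        none :: some c :: (s.map some ++ [none]) from rfl, bigrams_cons_cons]
      intro h
      rcases Multiset.mem_cons.1 h with h | h
      · simp at h
      · exact none_none_not_mem_aux s c h

lemma chain'_iff_bigrams {R : β → β → Prop} : ∀ (l : List β),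
    l.Chain' R ↔ ∀ p ∈ bigrams l, R p.1 p.2 := by
  intro l
  induction l with
  | nil => simp [bigrams, List.Chain']
  | cons x l ih =>
      cases l with
      | nil => simp [bigrams, List.Chain']
      | cons y l' =>
          simp only [List.Chain'] at ih ⊢
          rw [List.isChain_cons_cons, bigrams_cons_cons, ih]
          constructor
          · rintro ⟨h1, h2⟩ p hp
            rcases Multiset.mem_cons.1 hp with h | h
            · subst h; exact h1
            · exact h2 p h
          · intro h
            exact ⟨h (x, y) (Multiset.mem_cons_self _ _),
              fun p hp => h p (Multiset.mem_cons_of_mem hp)⟩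

/-- The adjacency relation compatible with a string of `¬p`-chars followed by `p`-chars. -/
def Rel (p : α → Prop) : Option α → Option α → Prop
  | none, none => False
  | none, some c => ¬ p c
  | some c, none => p c
  | some c, some c' => p c → p c'

lemma chain_right (p : α → Prop) : ∀ (t : List α), (∀ c ∈ t, p c) →
    List.Chain' (Rel p) (t.map some ++ [none]) := by
  intro t
  induction t with
  | nil => simp [List.Chain', List.isChain_singleton]
  | cons c t ih =>
      intro ht
      simp only [List.map_cons, List.cons_append]
      rw [List.Chain', List.isChain_cons]
      refine ⟨?_, ih fun d hd => ht d (List.mem_cons_of_mem _ hd)⟩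
      intro y hy
      cases t with
      | nil =>
          simp at hy
          subst hy
          exact ht c List.mem_cons_self
      | cons d t' =>
          simp at hy
          subst hy
          exact fun _ => ht d (by simp)

lemma chain_mid (p : α → Prop) : ∀ (s : List α), (∀ c ∈ s, ¬ p c) →
    ∀ (t : List α), (∀ c ∈ t, p c) → t ≠ [] →
    List.Chain' (Rel p) (s.map some ++ (t.map some ++ [none])) := by
  intro s
  induction s with
  | nil => intro _ t ht _; simpa using chain_right p t ht
  | cons c s ih =>
      intro hs t ht ht0
      simp only [List.map_cons, List.cons_append]
      rw [List.Chain', List.isChain_cons]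
      refine ⟨?_, ih (fun d hd => hs d (List.mem_cons_of_mem _ hd)) t ht ht0⟩
      intro y hy
      cases s with
      | nil =>
          cases t with
          | nil => exact absurd rfl ht0
          | cons d t' =>
              simp at hy
              subst hy
              exact fun _ => ht d (by simp)
      | cons e s' =>
          simp at hy
          subst hy
          exact fun h => absurd h (hs c (by simp))

lemma decomp (p : α → Prop) : ∀ (w : List α),
    List.Chain' (Rel p) (w.map some ++ [none]) →
    ∃ a b, w = a ++ b ∧ (∀ c ∈ a, ¬ p c) ∧ (∀ c ∈ b, p c) ∧
      (∀ c, w.head? = some c → p c → a = []) ∧ (w ≠ [] → b ≠ []) := by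
  intro w
  induction w with
  | nil =>
      intro _
      exact ⟨[], [], by simp, by simp, by simp, by simp, by simp⟩
  | cons c w ih =>
      intro h
      simp only [List.map_cons, List.cons_append] at h
      rw [List.Chain', List.isChain_cons] at h
      obtain ⟨hhead, htail⟩ := h
      obtain ⟨a, b, hab, ha, hb, hhd, hbne⟩ := ih htail
      by_cases hc : p c
      · -- everything is in the p-block
        have hall : ∀ d ∈ w, p d := by
          cases w with
          | nil => intro d hd; simp at hd
          | cons d w' =>
              have hyd : Rel p (some c) (some d) := by
                apply hhead
                simp
              have hpd : p d := hyd hc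
              have ha0 : a = [] := hhd d rfl hpd
              subst ha0
              simp only [List.nil_append] at hab
              intro e he
              exact hb e (hab ▸ he)
        refine ⟨[], c :: w, by simp, by simp, ?_, fun _ _ _ => rfl, fun _ => by simp⟩
        intro d hd
        rcases List.mem_cons.1 hd with rfl | hd
        · exact hc
        · exact hall d hd
      · refine ⟨c :: a, b, by simp [hab], ?_, hb, ?_, ?_⟩
        · intro d hd
          rcases List.mem_cons.1 hd with rfl | hd
          · exact hc
          · exact ha d hd
        · intro d hd hpd
          simp only [List.head?_cons, Option.some.injEq] at hd
          subst hd
          exact absurd hpd hc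
        · intro _
          cases w with
          | nil =>
              exfalso
              have : Rel p (some c) none := by
                apply hhead; simp
              exact hc this
          | cons d w' =>
              exact hbne (by simp)

/-- Map that keeps `¬p` characters and kills `p` characters to the delimiter. -/
def fk (p : α → Prop) [DecidablePred p] : Option α → Option α :=
  fun o => o.bind fun c => if p c then none else some c

/-- Map that keeps `p` characters and kills `¬p` characters to the delimiter. -/
def gk (p : α → Prop) [DecidablePred p] : Option α → Option α :=
  fun o => o.bind fun c => if p c then some c else none

lemma map_phi_left (p : α → Prop) [DecidablePred p] (s t : List α)
    (hs : ∀ c ∈ s, ¬ p c) (ht : ∀ c ∈ t, p c) :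
    (Phi (s ++ t)).map (Prod.map (fk p) (fk p)) =
      Phi s + Multiset.replicate t.length (none, none) := by
  have hlist : (delim (s ++ t)).map (fk p) =
      (none :: s.map some) ++ List.replicate t.length none ++ [none] := by
    have h1 : s.map (fk p ∘ some) = s.map some := by
      apply List.map_congr_left
      intro c hc
      simp [fk, hs c hc]
    have h2 : t.map (fk p ∘ some) = List.replicate t.length none := by
      refine List.eq_replicate_iff.2 ⟨by simp, ?_⟩
      intro x hx
      simp only [List.mem_map] at hx
      obtain ⟨c, hc, rfl⟩ := hx
      simp [fk, ht c hc]
    simp only [delim, List.map_cons, List.map_append, List.map_map, h1, h2]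
    simp [fk, List.append_assoc]
  rw [Phi, ← bigrams_map, hlist, bigrams_append_replicate]
  simp [Phi, delim]

lemma map_phi_right (p : α → Prop) [DecidablePred p] (s t : List α)
    (hs : ∀ c ∈ s, ¬ p c) (ht : ∀ c ∈ t, p c) :
    (Phi (s ++ t)).map (Prod.map (gk p) (gk p)) =
      Multiset.replicate s.length (none, none) + Phi t := by
  have hlist : (delim (s ++ t)).map (gk p) =
      none :: (List.replicate s.length none ++ (t.map some ++ [none])) := by
    have h1 : s.map (gk p ∘ some) = List.replicate s.length none := by
      refine List.eq_replicate_iff.2 ⟨by simp, ?_⟩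
      intro x hx
      simp only [List.mem_map] at hx
      obtain ⟨c, hc, rfl⟩ := hx
      simp [gk, hs c hc]
    have h2 : t.map (gk p ∘ some) = t.map some := by
      apply List.map_congr_left
      intro c hc
      simp [gk, ht c hc]
    simp only [delim, List.map_cons, List.map_append, List.map_map, h1, h2]
    simp [gk, List.append_assoc]
  rw [Phi, ← bigrams_map, hlist, bigrams_replicate_append]
  rfl

end UDaux

open UDaux

theorem UD_append_of_disjoint {α : Type*} [Fintype α] (u v : List α)
    (hu : UD u) (hv : UD v) (hdisj : ∀ c : α, c ∈ u → c ∉ v) :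
    UD (u ++ v) := by
  classical
  rcases eq_or_ne u [] with rfl | hu0
  · simpa using hv
  rcases eq_or_ne v [] with rfl | hv0
  · simpa using hu
  set p : α → Prop := fun c => c ∈ v with hp
  have hsu : ∀ c ∈ u, ¬ p c := fun c hc => hdisj c hc
  have htv : ∀ c ∈ v, p c := fun _ h => h
  intro w hw
  -- the chain structure of delim (u ++ v)
  have hchain : List.Chain' (Rel p) (delim (u ++ v)) := by
    simp only [delim, List.map_append, List.append_assoc]
    rw [List.Chain', List.isChain_cons]
    refine ⟨?_, chain_mid p u hsu v htv hv0⟩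
    intro y hy
    cases u with
    | nil => exact absurd rfl hu0
    | cons c u' =>
        simp at hy
        subst hy
        exact hsu c (by simp)
  -- transfer to w
  have hchainw : List.Chain' (Rel p) (delim w) := by
    rw [chain'_iff_bigrams]
    intro q hq
    have hq' : q ∈ Phi (u ++ v) := by rw [← hw]; exact hq
    exact (chain'_iff_bigrams (delim (u ++ v))).1 hchain q hq'
  -- w is nonempty
  have hwne : w ≠ [] := by
    rintro rfl
    have h1 : ((none : Option α), (none : Option α)) ∈ Phi ([] : List α) := by
      simp [Phi, delim, bigrams]
    rw [hw] at h1
    exact none_none_not_mem (u ++ v) (by simp [hu0]) h1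
  -- decompose w
  simp only [delim] at hchainw
  rw [List.Chain', List.isChain_cons] at hchainw
  obtain ⟨hhead, htail⟩ := hchainw
  obtain ⟨a, b, hab, ha, hb, _, hbne⟩ := decomp p w htail
  have hbne' : b ≠ [] := hbne hwne
  have hane : a ≠ [] := by
    rintro rfl
    simp only [List.nil_append] at hab
    subst hab
    cases w with
    | nil => exact hwne rfl
    | cons c w' =>
        have : Rel p none (some c) := by
          apply hhead
          simp
        exact this (hb c (by simp))
  subst hab
  -- the two map equations
  have h1 := congrArg (Multiset.map (Prod.map (fk p) (fk p))) hw
  rw [map_phi_left p a b ha hb, map_phi_left p u v hsu htv] at h1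
  have h2 := congrArg (Multiset.map (Prod.map (gk p) (gk p))) hw
  rw [map_phi_right p a b ha hb, map_phi_right p u v hsu htv] at h2
  -- lengths agree
  have hlenb : b.length = v.length := by
    have := congrArg (Multiset.count ((none : Option α), (none : Option α))) h1
    simp only [Multiset.count_add, Multiset.count_replicate_self] at this
    rw [Multiset.count_eq_zero.2 (none_none_not_mem a hane),
      Multiset.count_eq_zero.2 (none_none_not_mem u hu0)] at this
    simpa using this
  have hlena : a.length = u.length := by
    have := congrArg (Multiset.count ((none : Option α), (none : Option α))) h2
    simp only [Multiset.count_add, Multiset.count_replicate_self] at this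
    rw [Multiset.count_eq_zero.2 (none_none_not_mem b hbne'),
      Multiset.count_eq_zero.2 (none_none_not_mem v hv0)] at this
    simpa using this
  rw [hlenb] at h1
  rw [hlena] at h2
  have hPa : Phi a = Phi u := add_right_cancel h1
  have hPb : Phi b = Phi v := add_left_cancel h2
  rw [hu a hPa, hv b hPb]
end

section
/- Every string w ∈ Σ* that is not uniquely decodable from its bigrams belongs to some obstruction language K_{x,a,b}; i.e., Σ* \ L_UNIQ ⊆ L_OBST. -/
/-- The obstruction language `I_{x,a,b} = Σ* a x (Σ\{a})* b Σ*`. -/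
def Ilang {α : Type*} (x a b : α) : Language α :=
  {w | ∃ p m s : List α, w = p ++ a :: x :: (m ++ b :: s) ∧ a ∉ m}

/-- The obstruction language `J_{x,a,b} = Σ* a (Σ\{x})* b Σ*`. -/
def Jlang {α : Type*} (x a b : α) : Language α :=
  {w | ∃ p m s : List α, w = p ++ a :: (m ++ b :: s) ∧ x ∉ m}

/-- The obstruction language `K_{x,a,b} = I_{x,a,b} ∩ J_{x,a,b}`. -/
def Klang {α : Type*} (x a b : α) : Language α :=
  {w | w ∈ Ilang x a b ∧ w ∈ Jlang x a b}

section Helpers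

variable {β : Type*}

lemma bigrams_cons_s16 (a b : β) (l : List β) :
    bigrams (a :: b :: l) = (a, b) ::ₘ bigrams (b :: l) := rfl

lemma exists_of_mem_bigrams {c d : β} :
    ∀ {L : List β}, (c, d) ∈ bigrams L → ∃ p s, L = p ++ c :: d :: s
  | [], h => by simp [bigrams] at h
  | [a], h => by simp [bigrams] at h
  | a :: b :: l, h => by
      rw [bigrams_cons_s16, Multiset.mem_cons] at h
      rcases h with h | h
      · obtain ⟨h1, h2⟩ := Prod.mk.injEq .. ▸ h
        exact ⟨[], l, by rw [h1, h2]; rfl⟩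
      · obtain ⟨p, s, hp⟩ := exists_of_mem_bigrams h
        exact ⟨a :: p, s, by rw [hp]; rfl⟩

lemma first_split {c : β} : ∀ {L : List β}, c ∈ L → ∃ p s, L = p ++ c :: s ∧ c ∉ p
  | [], h => by simp at h
  | a :: l, h => by
      by_cases hca : c = a
      · exact ⟨[], l, by simp [hca]⟩
      · have : c ∈ l := by rcases List.mem_cons.mp h with h | h; exact absurd h hca; exact h
        obtain ⟨p, s, hp, hnp⟩ := first_split this
        exact ⟨a :: p, s, by rw [hp]; rfl, by simp [hnp, hca]⟩

lemma twosplit {x : β} {X' : List β} :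
    ∀ (A p B : List β), p ++ x :: X' = A ++ B → x ∈ A ∨ ∃ q, B = q ++ x :: X'
  | [], p, B, h => Or.inr ⟨p, h.symm⟩
  | e :: A', [], B, h => by
      rw [List.cons_append] at h
      have : x = e := (List.cons.injEq _ _ _ _ ▸ h :).1
      exact Or.inl (this ▸ List.mem_cons_self)
  | e :: A', f :: p', B, h => by
      simp only [List.cons_append, List.cons.injEq] at h
      rcases twosplit A' p' B h.2 with h' | h'
      · exact Or.inl (List.mem_cons_of_mem _ h')
      · exact Or.inr h'

lemma edge_before (c : β) (r : List β) :
    ∀ (l : List β), l ≠ [] → ∃ e, (e, c) ∈ bigrams (l ++ c :: r)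
  | [], h => absurd rfl h
  | [g], _ => ⟨g, by rw [List.singleton_append, bigrams_cons_s16]; exact Multiset.mem_cons_self _ _⟩
  | g :: g' :: l', _ => by
      obtain ⟨e, he⟩ := edge_before c r (g' :: l') (by simp)
      exact ⟨e, by
        have : (g :: g' :: l') ++ c :: r = g :: g' :: (l' ++ c :: r) := rfl
        rw [this, bigrams_cons_s16]
        exact Multiset.mem_cons_of_mem he⟩

lemma walk {S : β → Prop} :
    ∀ (L' : List β) (h : β), (∀ c d, (c, d) ∈ bigrams (h :: L') → S c → S d) → S h →
      ∀ e ∈ h :: L', S e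
  | [], h, _, hS, e, he => by
      rcases List.mem_singleton.mp he with rfl
      exact hS
  | g :: L'', h, hcl, hS, e, he => by
      have hSg : S g := hcl h g (by rw [bigrams_cons_s16]; exact Multiset.mem_cons_self _ _) hS
      rcases List.mem_cons.mp he with rfl | he'
      · exact hS
      · exact walk L'' g (fun c d hm => hcl c d (by rw [bigrams_cons_s16]; exact Multiset.mem_cons_of_mem hm)) hSg e he'
inductive Chain (a x : β) : List β → List β → Prop
  | last (F : List β) (h : a ∉ F) : Chain a x (a :: F) F
  | cons (m T F : List β) (hm : a ∉ m) (ht : Chain a x T F) : Chain a x (a :: x :: (m ++ T)) F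

lemma chain_notmem {a x : β} {T F : List β} (h : Chain a x T F) : a ∉ F := by
  induction h with
  | last F h => exact h
  | cons m T F hm ht ih => exact ih

lemma chain_head {a x : β} {T F : List β} (h : Chain a x T F) : ∃ T', T = a :: T' := by
  cases h with
  | last F h => exact ⟨F, rfl⟩
  | cons m T F hm ht => exact ⟨_, rfl⟩

lemma chain_prefix {a x : β} {T F : List β} (h : Chain a x T F) : ∃ pre, T = pre ++ a :: F := by
  induction h with
  | last F h => exact ⟨[], rfl⟩
  | cons m T F hm ht ih =>
      obtain ⟨pre, hpre⟩ := ih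
      exact ⟨a :: x :: (m ++ pre), by rw [hpre]; simp⟩

lemma chain_succ {a x : β} (hax : x ≠ a) {T F : List β} (h : Chain a x T F) :
    ∀ (p : List β) (c : β) (s : List β), T = p ++ a :: c :: s → c ≠ x → c :: s = F := by
  induction h with
  | last F hF =>
      intro p c s hT hcx
      cases p with
      | nil =>
          simp only [List.nil_append, List.cons.injEq] at hT
          rw [hT.2]
      | cons e p' =>
          simp only [List.cons_append, List.cons.injEq] at hT
          exact absurd (hT.2 ▸ (by simp : a ∈ p' ++ a :: c :: s)) hF
  | cons m T F hm ht ih =>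
      intro p c s hT hcx
      cases p with
      | nil =>
          simp only [List.nil_append, List.cons.injEq] at hT
          exact absurd hT.2.1.symm hcx
      | cons e p' =>
          simp only [List.cons_append, List.cons.injEq] at hT
          cases p' with
          | nil =>
              simp only [List.nil_append, List.cons.injEq] at hT
              exact absurd hT.2.1 hax
          | cons f p'' =>
              simp only [List.cons_append, List.cons.injEq] at hT
              rcases twosplit m p'' T hT.2.2.symm with hmem | ⟨q, hq⟩
              · exact absurd hmem hm
              · exact ih q c s hq hcx

lemma chain_clos {a x : β} {U F : List β} (hxF : x ∉ F)
    (Hbad : ∀ c ∈ F, ¬ ∃ p m s, U = p ++ a :: x :: (m ++ c :: s) ∧ a ∉ m) :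
    ∀ {T : List β}, Chain a x T F → ∀ (pre : List β), U = pre ++ T →
    ∀ (p : List β) (c d : β) (s : List β), T = p ++ c :: d :: s → c ∈ F → d ∈ F := by
  intro T hch
  induction hch with
  | last F' hF =>
      intro pre hU p c d s hT hc
      cases p with
      | nil =>
          simp only [List.nil_append, List.cons.injEq] at hT
          obtain ⟨rfl, -⟩ := hT
          exact absurd hc hF
      | cons e p' =>
          simp only [List.cons_append, List.cons.injEq] at hT
          rw [hT.2]
          simp
  | cons m T' F' hm hch' ih =>
      intro pre hU p c d s hT hc
      cases p with
      | nil =>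
          simp only [List.nil_append, List.cons.injEq] at hT
          obtain ⟨rfl, -, -⟩ := hT
          exact absurd hc (chain_notmem hch')
      | cons e p' =>
          simp only [List.cons_append, List.cons.injEq] at hT
          cases p' with
          | nil =>
              simp only [List.nil_append, List.cons.injEq] at hT
              obtain ⟨-, rfl, -⟩ := hT
              exact absurd hc hxF
          | cons f p'' =>
              simp only [List.cons_append, List.cons.injEq] at hT
              obtain ⟨rfl, rfl, hT3⟩ := hT
              rcases twosplit m p'' T' hT3.symm with hmem | ⟨q, hq⟩
              · exfalso
                obtain ⟨μ, ν, hμν⟩ := List.append_of_mem hmem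
                refine Hbad c hc ⟨pre, μ, ν ++ T', ?_, ?_⟩
                · rw [hU, hμν]; simp
                · intro hamem
                  exact hm (by rw [hμν]; exact List.mem_append_left _ hamem)
              · exact ih hxF Hbad (pre ++ a :: x :: m) (by rw [hU]; simp) q c d s hq hc

lemma toChain (a x : β) : ∀ (n : ℕ) (T : List β), T.length ≤ n → T.head? = some a →
    (∀ p m s, T = p ++ a :: (m ++ a :: s) → x ∉ m → False) →
    (∀ c p m s, T = p ++ a :: c :: (m ++ x :: s) → a ∉ m → c ≠ a → c ≠ x → False) →
    ∃ F, Chain a x T F := by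
  intro n
  induction n with
  | zero =>
      intro T hlen hhead _ _
      cases T <;> simp_all
  | succ n IH =>
      intro T hlen hhead h1 h2
      obtain ⟨T', rfl⟩ : ∃ T', T = a :: T' := by
        cases T with
        | nil => exact absurd hhead (by simp)
        | cons b T' =>
            rw [List.head?_cons, Option.some.injEq] at hhead
            exact ⟨T', by rw [hhead]⟩
      by_cases ha : a ∈ T'
      · obtain ⟨m, T₂, hT', hma⟩ := first_split ha
        by_cases hx : x ∈ m
        · obtain ⟨c, m', hm⟩ : ∃ c m', m = c :: m' := by
            cases m with
            | nil => simp at hx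
            | cons c m' => exact ⟨c, m', rfl⟩
          by_cases hcx : c = x
          · subst hcx
            have hTeq : a :: T' = a :: c :: (m' ++ (a :: T₂)) := by rw [hT', hm]; rfl
            have hlen' : (a :: T₂).length ≤ n := by
              have := congrArg List.length hTeq
              simp only [List.length_cons, List.length_append] at this hlen ⊢
              omega
            have ham' : a ∉ m' := fun hmem => hma (hm ▸ List.mem_cons_of_mem _ hmem)
            obtain ⟨F, ch⟩ := IH (a :: T₂) hlen' (by simp)
              (fun p mm ss hp hxm => h1 (a :: c :: m' ++ p) mm ss
                (by rw [hTeq, hp]; simp) hxm)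
              (fun cc p mm ss hp hxm hca hcx => h2 cc (a :: c :: m' ++ p) mm ss
                (by rw [hTeq, hp]; simp) hxm hca hcx)
            exact ⟨F, by rw [hTeq]; exact Chain.cons m' (a :: T₂) F ham' ch⟩
          · have hxm' : x ∈ m' := by
              rcases List.mem_cons.mp (hm ▸ hx) with h | h
              · exact absurd h.symm hcx
              · exact h
            obtain ⟨μ, ν, hμν, _⟩ := first_split hxm'
            have hca : c ≠ a := fun h => hma (hm ▸ (h ▸ (List.mem_cons_self : c ∈ c :: m')))
            have haμ : a ∉ μ := fun hmem =>
              hma (hm ▸ List.mem_cons_of_mem _ (hμν ▸ List.mem_append_left _ hmem))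
            exact absurd (h2 c [] μ (ν ++ a :: T₂)
              (by rw [hT', hm, hμν]; simp) haμ hca (fun h => hcx h)) (by simp)
        · exact absurd (h1 [] m T₂ (by rw [hT']; rfl) hx) (by simp)
      · exact ⟨T', Chain.last T' ha⟩
lemma repex (a : β) : ∀ (n : ℕ) (T : List β), T.length ≤ n →
    (∀ c p m s, a :: T = p ++ a :: c :: (m ++ a :: s) → a ∉ m → c ≠ a → False) →
    ∃ k G, a :: T = List.replicate (k + 1) a ++ G ∧ a ∉ G := by
  intro n
  induction n with
  | zero =>
      intro T hlen _
      rw [Nat.le_zero, List.length_eq_zero_iff] at hlen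
      exact ⟨0, [], by simp [hlen]⟩
  | succ n IH =>
      intro T hlen h2
      by_cases ha : a ∈ T
      · obtain ⟨m, T₂, hT, hma⟩ := first_split ha
        cases m with
        | cons c m' =>
            exact absurd (h2 c [] m' T₂ (by rw [hT]; rfl)
              (fun hm => hma (List.mem_cons_of_mem _ hm))
              (fun h => hma (h ▸ (List.mem_cons_self : c ∈ c :: m')))) (by simp)
        | nil =>
            obtain ⟨k, G, hG, haG⟩ := IH T₂
              (by have := congrArg List.length hT; simp at this; omega)
              (fun c p m s hp ham hca =>
                h2 c (a :: p) m s (by rw [hT, List.nil_append, hp]; rfl) ham hca)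
            exact ⟨k + 1, G, by rw [hT, List.nil_append, hG]; rfl, haG⟩
      · exact ⟨0, T, by simp, ha⟩

lemma rephead {a y : β} (hya : y ≠ a) :
    ∀ (P : List β) (k : ℕ) (S G : List β), P ++ a :: y :: S = List.replicate k a ++ G →
      a ∉ G → G = y :: S := by
  intro P
  induction P with
  | nil =>
      intro k S G h haG
      cases k with
      | zero => exact absurd (by simp only [List.replicate_zero, List.nil_append] at h; rw [← h]; simp : a ∈ G) haG
      | succ k =>
          rw [List.replicate_succ, List.cons_append] at h
          simp only [List.nil_append, List.cons.injEq] at h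
          cases k with
          | zero => simpa using h.2.symm
          | succ k =>
              rw [List.replicate_succ, List.cons_append, List.cons.injEq] at h
              exact absurd h.2.1 hya
  | cons e P' IH =>
      intro k S G h haG
      cases k with
      | zero => exact absurd (by simp only [List.replicate_zero, List.nil_append] at h; rw [← h]; simp : a ∈ G) haG
      | succ k =>
          rw [List.replicate_succ, List.cons_append, List.cons_append, List.cons.injEq] at h
          exact IH k S G h.2 haG
lemma mem_bigrams_build {c d : β} : ∀ (p s : List β), (c, d) ∈ bigrams (p ++ c :: d :: s)
  | [], s => by rw [List.nil_append, bigrams_cons_s16]; exact Multiset.mem_cons_self _ _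
  | e :: p', s => by
      rw [List.cons_append]
      cases hp : p' ++ c :: d :: s with
      | nil => exact absurd hp (by simp)
      | cons f r =>
          rw [bigrams_cons_s16]
          exact Multiset.mem_cons_of_mem (hp ▸ mem_bigrams_build p' s)

lemma bigrams_snoc2 : ∀ (l : List β) (d e : β),
    bigrams (l ++ [d, e]) = (d, e) ::ₘ bigrams (l ++ [d])
  | [], d, e => rfl
  | [g], d, e => by
      rw [show ([g] : List β) ++ [d, e] = [g, d, e] from rfl,
        show ([g] : List β) ++ [d] = [g, d] from rfl,
        bigrams_cons_s16 g d [e], bigrams_cons_s16 g d [], bigrams_cons_s16 d e [],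
        show bigrams ([e] : List β) = 0 from rfl, show bigrams ([d] : List β) = 0 from rfl]
      exact Multiset.cons_swap _ _ _
  | g :: g' :: l', d, e => by
      simp only [List.cons_append]
      rw [bigrams_cons_s16, bigrams_cons_s16]
      have IH := bigrams_snoc2 (g' :: l') d e
      simp only [List.cons_append] at IH
      rw [IH, Multiset.cons_swap]

lemma no_inner_none {α : Type*} :
    ∀ (l : List α) (p : List (Option α)) (z : Option α) (q : List (Option α)),
      p ++ none :: z :: q = l.map some ++ [none] → False
  | [], p, z, q, h => by
      have := congrArg List.length h
      simp at this
      omega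
  | c :: l', p, z, q, h => by
      cases p with
      | nil => simp at h
      | cons e p' =>
          rw [List.map_cons, List.cons_append, List.cons_append, List.cons.injEq] at h
          exact no_inner_none l' p' z q h.2

lemma phi_head {α : Type*} {w w' : List α} {c c' : α} {t t' : List α}
    (hphi : Phi w = Phi w') (hw : w = c :: t) (hw' : w' = c' :: t') : c = c' := by
  subst hw hw'
  have hmem : (none, some c) ∈ Phi (c' :: t') := by
    rw [← hphi]
    show (none, some c) ∈ bigrams (none :: some c :: (t.map some ++ [none]))
    rw [bigrams_cons_s16]
    exact Multiset.mem_cons_self _ _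
  obtain ⟨p, s, hps⟩ := exists_of_mem_bigrams hmem
  have hps' : p ++ none :: some c :: s = none :: some c' :: (t'.map some ++ [none]) := hps.symm
  cases p with
  | nil =>
      simp only [List.nil_append, List.cons.injEq, Option.some.injEq] at hps'
      exact hps'.2.1
  | cons e p' =>
      rw [List.cons_append, List.cons.injEq] at hps'
      cases p' with
      | nil => simp at hps'
      | cons f p'' =>
          rw [List.cons_append, List.cons.injEq] at hps'
          exact (no_inner_none t' p'' (some c) s hps'.2.2).elim

lemma phi_last {α : Type*} {w w' : List α} {L L' : α} {init init' : List α}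
    (hphi : Phi w = Phi w') (hw : w = init ++ [L]) (hw' : w' = init' ++ [L']) : L = L' := by
  subst hw hw'
  have hmem : (some L, none) ∈ Phi (init' ++ [L']) := by
    rw [← hphi]
    show (some L, none) ∈ bigrams (none :: ((init ++ [L]).map some ++ [none]))
    have : none :: ((init ++ [L]).map some ++ [none]) =
        (none :: init.map some) ++ some L :: none :: [] := by simp
    rw [this]
    exact mem_bigrams_build _ _
  obtain ⟨p, s, hps⟩ := exists_of_mem_bigrams hmem
  have hps' : p ++ some L :: none :: s = none :: ((init' ++ [L']).map some ++ [none]) := hps.symm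
  cases p with
  | nil => simp at hps'
  | cons e p' =>
      rw [List.cons_append, List.cons.injEq] at hps'
      cases s with
      | nil =>
          have h2 : p' ++ [some L] ++ [none] = (init' ++ [L']).map some ++ [none] := by
            rw [← hps'.2]; simp
          have h3 : p' ++ [some L] = (init' ++ [L']).map some :=
            (List.append_inj' h2 rfl).1
          have h4 : p' ++ [some L] = init'.map some ++ [some L'] := by
            rw [h3]; simp
          have h5 : some L = some L' := by
            have := (List.append_inj' h4 rfl).2
            simpa using this
          exact Option.some_injective _ h5
      | cons z s' =>
          exfalso
          have : (p' ++ [some L]) ++ none :: z :: s' = (init' ++ [L']).map some ++ [none] := by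
            rw [← hps'.2]; simp
          exact no_inner_none (init' ++ [L']) (p' ++ [some L]) z s' this

lemma bigrams_map {γ : Type*} (f : β → γ) :
    ∀ (l : List β), bigrams (l.map f) = (bigrams l).map (Prod.map f f)
  | [] => rfl
  | [a] => rfl
  | a :: b :: l => by
      rw [List.map_cons, List.map_cons, bigrams_cons_s16, bigrams_cons_s16, Multiset.map_cons]
      rw [← (List.map_cons : List.map f (b :: l) = f b :: List.map f l), bigrams_map f (b :: l)]
      rfl

lemma phi_decomp {α : Type*} (c : α) (t : List α) (init : List α) (L : α)
    (h : c :: t = init ++ [L]) :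
    Phi (c :: t) = (none, some c) ::ₘ (some L, none) ::ₘ bigrams ((c :: t).map some) := by
  have h1 : delim (c :: t) = none :: some c :: (t.map some ++ [none]) := rfl
  show bigrams (delim (c :: t)) = _
  rw [h1, bigrams_cons_s16]
  congr 1
  have h2 : some c :: (t.map some ++ [none]) = (c :: t).map some ++ [none] := rfl
  rw [h2, h]
  have h3 : (init ++ [L]).map some ++ [none] = init.map some ++ [some L, none] := by simp
  rw [h3, bigrams_snoc2]
  congr 1
  have h4 : init.map some ++ [some L] = (init ++ [L]).map some := by simp
  rw [h4]

lemma phi_bigrams {α : Type*} {w w' : List α} {c c' : α} {t t' : List α}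
    (hphi : Phi w = Phi w') (hw : w = c :: t) (hw' : w' = c' :: t') :
    bigrams w = bigrams w' := by
  obtain ⟨init, L, hconcat⟩ : ∃ init L, w = init ++ [L] := by
    rcases List.eq_nil_or_concat w with h | ⟨init, L, h⟩
    · exact absurd (hw ▸ h) (by simp)
    · exact ⟨init, L, by rw [h, List.concat_eq_append]⟩
  obtain ⟨init', L', hconcat'⟩ : ∃ init' L', w' = init' ++ [L'] := by
    rcases List.eq_nil_or_concat w' with h | ⟨init', L', h⟩
    · exact absurd (hw' ▸ h) (by simp)
    · exact ⟨init', L', by rw [h, List.concat_eq_append]⟩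
  have hc : c = c' := phi_head hphi hw hw'
  have hL : L = L' := phi_last hphi hconcat hconcat'
  subst hc
  subst hL
  have hd := phi_decomp c t init L (hw ▸ hconcat)
  have hd' := phi_decomp c t' init' L (hw' ▸ hconcat')
  rw [hw, hw']
  have heq : (none, some c) ::ₘ (some L, none) ::ₘ bigrams ((c :: t).map some) =
      (none, some c) ::ₘ (some L, none) ::ₘ bigrams ((c :: t').map some) := by
    rw [← hd, ← hd', ← hw, ← hw', hphi]
  rw [Multiset.cons_inj_right, Multiset.cons_inj_right] at heq
  rw [bigrams_map, bigrams_map] at heq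
  have hinj : Function.Injective (Prod.map (some : α → Option α) (some : α → Option α)) := by
    intro p q hpq
    have h1 := congrArg Prod.fst hpq
    have h2 := congrArg Prod.snd hpq
    simp [Prod.map] at h1 h2
    exact Prod.ext h1 h2
  exact Multiset.map_injective hinj heq
lemma main_witness {α : Type*} : ∀ (n : ℕ) (U V : List α), U.length ≤ n →
    bigrams U = bigrams V → U.head? = V.head? → U ≠ V →
    ∃ x a b, a ≠ x ∧ b ≠ x ∧ U ∈ Ilang x a b ∧ U ∈ Jlang x a b := by
  intro n
  induction n with
  | zero =>
      intro U V hlen hbg hh hne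
      rw [Nat.le_zero, List.length_eq_zero_iff] at hlen
      subst hlen
      cases V with
      | nil => exact absurd rfl hne
      | cons v V' => simp at hh
  | succ n IH =>
    intro U V hlen hbg hh hne
    match U, hlen with
    | [], _ =>
        cases V with
        | nil => exact absurd rfl hne
        | cons v V' => simp at hh
    | [u], _ =>
        cases V with
        | nil => simp at hh
        | cons v V' =>
            rw [List.head?_cons, List.head?_cons, Option.some.injEq] at hh
            subst hh
            cases V' with
            | nil => exact absurd rfl hne
            | cons v' V'' =>
                rw [show bigrams [u] = 0 from rfl, bigrams_cons_s16] at hbg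
                exact absurd hbg.symm (Multiset.cons_ne_zero)
    | a :: x :: U₂, hlen =>
      obtain ⟨y, V₂, rfl⟩ : ∃ y V₂, V = a :: y :: V₂ := by
        cases V with
        | nil => exact absurd hh (by simp)
        | cons v V₁ =>
            rw [List.head?_cons, List.head?_cons, Option.some.injEq] at hh
            subst hh
            cases V₁ with
            | nil =>
                rw [bigrams_cons_s16, show bigrams [a] = 0 from rfl] at hbg
                exact absurd hbg (Multiset.cons_ne_zero)
            | cons y V₂ => exact ⟨y, V₂, rfl⟩
      by_cases hxy : x = y
      · subst hxy
        rw [bigrams_cons_s16, bigrams_cons_s16, Multiset.cons_inj_right] at hbg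
        have hne' : x :: U₂ ≠ x :: V₂ := fun h => hne (by rw [h])
        have hlen' : (x :: U₂).length ≤ n := by simp at hlen ⊢; omega
        obtain ⟨x', a', b', h1, h2, hI, hJ⟩ := IH (x :: U₂) (x :: V₂) hlen' hbg rfl hne'
        obtain ⟨p, m, s, hU', hm⟩ := hI
        obtain ⟨p', m', s', hU'', hm'⟩ := hJ
        exact ⟨x', a', b', h1, h2,
          ⟨a :: p, m, s, by rw [show a :: x :: U₂ = a :: (x :: U₂) from rfl, hU']; rfl, hm⟩,
          ⟨a :: p', m', s', by rw [show a :: x :: U₂ = a :: (x :: U₂) from rfl, hU'']; rfl, hm'⟩⟩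
      · -- LEAF CASE
        have hyU : (a, y) ∈ bigrams (a :: x :: U₂) := by
          rw [hbg, bigrams_cons_s16]
          exact Multiset.mem_cons_self _ _
        obtain ⟨P, S, hPS⟩ := exists_of_mem_bigrams hyU
        by_cases hya : y = a
        · -- STEP 1: witness (x, a, a)
          subst hya
          cases P with
          | nil =>
              simp only [List.nil_append, List.cons.injEq] at hPS
              exact absurd hPS.2.1 hxy
          | cons e P' =>
              simp only [List.cons_append, List.cons.injEq] at hPS
              cases P' with
              | nil =>
                  simp only [List.nil_append, List.cons.injEq] at hPS
                  exact absurd hPS.2.1 hxy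
              | cons f P'' =>
                  simp only [List.cons_append, List.cons.injEq] at hPS
                  have haU₂ : y ∈ U₂ := by rw [hPS.2.2]; simp
                  obtain ⟨m, s', hU₂, ham⟩ := first_split haU₂
                  refine ⟨x, y, y, Ne.symm hxy, Ne.symm hxy,
                    ⟨[], m, s', by rw [show (y:α) :: x :: U₂ = [] ++ y :: x :: U₂ from rfl, hU₂], ham⟩,
                    ⟨y :: x :: P'', [], S, ?_, by simp⟩⟩
                  rw [List.nil_append]
                  have : y :: x :: U₂ = y :: x :: (P'' ++ y :: y :: S) := by rw [← hPS.2.2]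
                  rw [this]; simp
        · by_cases hxa : x = a
          · -- STEP 2a
            subst hxa
            by_cases h2 : ∃ c p m s, x :: x :: U₂ = p ++ x :: c :: (m ++ x :: s) ∧ x ∉ m ∧ c ≠ x
            · obtain ⟨c, p, m, s, hU', ham, hca⟩ := h2
              exact ⟨c, x, x, Ne.symm hca, Ne.symm hca, ⟨p, m, s, hU', ham⟩,
                ⟨[], [], U₂, rfl, by simp⟩⟩
            · exfalso
              obtain ⟨k, G, hrep, haG⟩ := repex x (x :: U₂).length (x :: U₂) le_rfl
                (fun c p m s hp ham hca => h2 ⟨c, p, m, s, hp, ham, hca⟩)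
              have hPG : P ++ x :: y :: S = List.replicate (k + 1) x ++ G := by
                rw [← hPS]; exact hrep
              have hG : G = y :: S := rephead hya P (k + 1) S G hPG haG
              have hclos : ∀ c d, (c, d) ∈ bigrams (x :: x :: U₂) → c ∈ G → d ∈ G := by
                intro c d hcd hcG
                obtain ⟨p, s, hps⟩ := exists_of_mem_bigrams hcd
                rcases twosplit (List.replicate (k + 1) x) p G (hps.symm.trans hrep) with
                  hmem | ⟨q, hq⟩
                · exact absurd ((List.eq_of_mem_replicate hmem) ▸ hcG) haG
                · rw [hq]; simp
              have hwalk : ∀ e ∈ y :: V₂, e ∈ G := by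
                refine walk V₂ y (fun c d hm hc => hclos c d ?_ hc) (hG ▸ (List.mem_cons_self : y ∈ y :: S))
                rw [hbg, bigrams_cons_s16]
                exact Multiset.mem_cons_of_mem hm
              have haa : (x, x) ∈ bigrams (x :: y :: V₂) := by
                rw [← hbg, bigrams_cons_s16]
                exact Multiset.mem_cons_self _ _
              obtain ⟨p, s, hps⟩ := exists_of_mem_bigrams haa
              have haV : x ∈ y :: V₂ := by
                cases p with
                | nil =>
                    simp only [List.nil_append, List.cons.injEq] at hps
                    exact absurd hps.2.1 hya
                | cons e p' =>
                    simp only [List.cons_append, List.cons.injEq] at hps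
                    rw [hps.2]; simp
              exact haG (hwalk x haV)
          · -- STEP 3: a, x, y pairwise distinct
            by_cases hW1 : (a :: x :: U₂) ∈ Jlang x a a
            · have haU₂ : a ∈ U₂ := by
                cases P with
                | nil =>
                    simp only [List.nil_append, List.cons.injEq] at hPS
                    exact absurd hPS.2.1 hxy
                | cons e P' =>
                    simp only [List.cons_append, List.cons.injEq] at hPS
                    cases P' with
                    | nil =>
                        simp only [List.nil_append, List.cons.injEq] at hPS
                        exact absurd hPS.2.1 hxa
                    | cons f P'' =>
                        simp only [List.cons_append, List.cons.injEq] at hPS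
                        rw [hPS.2.2]; simp
              obtain ⟨m, s', hU₂, ham⟩ := first_split haU₂
              exact ⟨x, a, a, Ne.symm hxa, Ne.symm hxa,
                ⟨[], m, s', by rw [show a :: x :: U₂ = [] ++ a :: x :: U₂ from rfl, hU₂], ham⟩,
                hW1⟩
            · by_cases hW2 : ∃ c p m s,
                  (a :: x :: U₂) = p ++ a :: c :: (m ++ x :: s) ∧ a ∉ m ∧ c ≠ a ∧ c ≠ x
              · obtain ⟨c, p, m, s, hU', ham, hca, hcx⟩ := hW2
                exact ⟨c, a, x, Ne.symm hca, Ne.symm hcx, ⟨p, m, s, hU', ham⟩,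
                  ⟨[], [], U₂, rfl, by simp⟩⟩
              · by_cases hW3 : ∃ d, d ≠ x ∧ (a :: x :: U₂) ∈ Ilang x a d ∧
                    (a :: x :: U₂) ∈ Jlang x a d
                · obtain ⟨d, hdx, hI, hJ⟩ := hW3
                  exact ⟨x, a, d, Ne.symm hxa, hdx, hI, hJ⟩
                · exfalso
                  obtain ⟨F, hch⟩ := toChain a x (a :: x :: U₂).length (a :: x :: U₂) le_rfl
                    (by simp)
                    (fun p m s hU' hxm => hW1 ⟨p, m, s, hU', hxm⟩)
                    (fun c p m s hU' ham hca hcx => hW2 ⟨c, p, m, s, hU', ham, hca, hcx⟩)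
                  have hF : y :: S = F :=
                    chain_succ hxa hch P y S hPS (fun h => hxy h.symm)
                  have haF : a ∉ F := chain_notmem hch
                  have hxF : x ∉ F := by
                    intro hxFm
                    rw [← hF] at hxFm
                    rcases List.mem_cons.mp hxFm with h | hxS
                    · exact hxy h
                    · obtain ⟨μ, ν, hμν⟩ := List.append_of_mem hxS
                      have haμ : a ∉ μ := fun hm =>
                        haF (by rw [← hF, hμν]; simp [hm])
                      exact hW2 ⟨y, P, μ, ν, by rw [hPS, hμν], haμ, hya, fun h => hxy h.symm⟩
                  have Hbad : ∀ c ∈ F,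
                      ¬∃ p m s, (a :: x :: U₂) = p ++ a :: x :: (m ++ c :: s) ∧ a ∉ m := by
                    rintro c hcF ⟨p, m, s, hU', ham⟩
                    obtain ⟨pre, hpre⟩ := chain_prefix hch
                    obtain ⟨μ, ν, hμν⟩ := List.append_of_mem hcF
                    have hxμ : x ∉ μ := fun hm => hxF (by rw [hμν]; simp [hm])
                    exact hW3 ⟨c, fun h => hxF (h ▸ hcF), ⟨p, m, s, hU', ham⟩,
                      ⟨pre, μ, ν, by rw [hpre, hμν], hxμ⟩⟩
                  have hclos : ∀ c d, (c, d) ∈ bigrams (a :: x :: U₂) → c ∈ F → d ∈ F := by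
                    intro c d hcd hc
                    obtain ⟨p, s, hps⟩ := exists_of_mem_bigrams hcd
                    exact chain_clos hxF Hbad hch [] rfl p c d s hps hc
                  have hwalk : ∀ e ∈ y :: V₂, e ∈ F := by
                    refine walk V₂ y (fun c d hm hc => hclos c d ?_ hc)
                      (hF ▸ (List.mem_cons_self : y ∈ y :: S))
                    rw [hbg, bigrams_cons_s16]
                    exact Multiset.mem_cons_of_mem hm
                  cases hch with
                  | last F' hnm =>
                      exact hxF List.mem_cons_self
                  | cons m T F' hm hch' =>
                      obtain ⟨T'', hT''⟩ := chain_head hch'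
                      obtain ⟨e, he⟩ := edge_before a T'' (a :: x :: m) (by simp)
                      have heV : (e, a) ∈ bigrams (a :: y :: V₂) := by
                        rw [← hbg]
                        have hUeq : a :: x :: (m ++ T) = (a :: x :: m) ++ a :: T'' := by
                          rw [hT'']; simp
                        rw [hUeq]
                        exact he
                      obtain ⟨p, s, hps⟩ := exists_of_mem_bigrams heV
                      have haV : a ∈ y :: V₂ := by
                        cases p with
                        | nil =>
                            simp only [List.nil_append, List.cons.injEq] at hps
                            exact absurd hps.2.1 hya
                        | cons g p' =>
                            simp only [List.cons_append, List.cons.injEq] at hps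
                            rw [hps.2]; simp
                      exact haF (hwalk a haV)

end Helpers

theorem not_UD_mem_obstruction {α : Type*} [Fintype α] (w : List α) (h : ¬ UD w) :
    ∃ x a b : α, a ≠ x ∧ b ≠ x ∧ w ∈ Klang x a b := by
  unfold UD at h
  push_neg at h
  obtain ⟨w', hphi, hne⟩ := h
  cases hw : w with
  | nil =>
      exfalso
      subst hw
      cases hw' : w' with
      | nil => exact hne (hw' ▸ rfl)
      | cons c t =>
          subst hw'
          have hmem : (none, some c) ∈ Phi ([] : List α) := by
            rw [← hphi]
            show (none, some c) ∈ bigrams (none :: some c :: (t.map some ++ [none]))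
            rw [bigrams_cons_s16]
            exact Multiset.mem_cons_self _ _
          have : Phi ([] : List α) = (none, none) ::ₘ 0 := rfl
          rw [this] at hmem
          simp at hmem
  | cons c t =>
      cases hw' : w' with
      | nil =>
          exfalso
          subst hw hw'
          have hmem : (none, some c) ∈ Phi ([] : List α) := by
            rw [hphi]
            show (none, some c) ∈ bigrams (none :: some c :: (t.map some ++ [none]))
            rw [bigrams_cons_s16]
            exact Multiset.mem_cons_self _ _
          have : Phi ([] : List α) = (none, none) ::ₘ 0 := rfl
          rw [this] at hmem
          simp at hmem
      | cons c' t' =>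
          subst hw hw'
          have hc : c' = c := phi_head hphi rfl rfl
          have hbg : bigrams (c :: t) = bigrams (c' :: t') :=
            phi_bigrams (hphi.symm) rfl rfl
          have hh : (c :: t).head? = (c' :: t').head? := by rw [hc]; rfl
          obtain ⟨x, a, b, h1, h2, hI, hJ⟩ :=
            main_witness (c :: t).length (c :: t) (c' :: t') le_rfl hbg hh
              (fun heq => hne heq.symm)
          exact ⟨x, a, b, h1, h2, hI, hJ⟩
end
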